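/- arXiv:1009.5274 — 5 statements merged into one kernel-verified Lean document; each statement's English description precedes it below -/
import Mathlib

section
/- Let U ⊆ ℂ be an open set and N : U → ℍ a smooth map into the quaternions with Re N = 0 and N² = −1 pointwise (i.e. N takes values in S² ⊂ Im ℍ). Then N is harmonic, i.e. N_xx + N_yy = N·(N_x² + N_y²) on U (quaternionic products), if and only if the 1-form *A with components *A(∂x) = ¼(N·N_y − N_x), *A(∂y) = −¼(N·N_x + N_y) is closed, i.e. ∂x(N·N_x + N_y) + ∂y(N·N_y − N_x) = 0 on U. (Chart version of Lemma 2.1: N is harmonic iff the Hopf field A of the associated complex structure satisfies d*A = 0.) -/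
/- Chart version of Lemma 2.1: a map N : U → S² ⊂ Im ℍ is harmonic iff the
Hopf field A of the associated complex structure satisfies d*A = 0. -/

noncomputable section
open Complex

local notation "ℍ" => Quaternion ℝ

/-- Partial derivative in the direction 1 (the x-direction). -/
def dx (f : ℂ → ℍ) (z : ℂ) : ℍ := fderiv ℝ f z 1

/-- Partial derivative in the direction i (the y-direction). -/
def dy (f : ℂ → ℍ) (z : ℂ) : ℍ := fderiv ℝ f z Complex.I

lemma aux_hQ (N : ℂ → ℍ) {z : ℂ} (hN : ContDiffAt ℝ (⊤ : ℕ∞) N z) (a : ℂ) :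
    HasFDerivAt (fun w => fderiv ℝ N w a) ((fderiv ℝ (fderiv ℝ N) z).flip a) z := by
  have hg : ContDiffAt ℝ (⊤ : ℕ∞) (fderiv ℝ N) z :=
    hN.fderiv_right (by exact_mod_cast (le_top : (⊤ : ℕ∞) + 1 ≤ ⊤))
  have h1 : HasFDerivAt (fderiv ℝ N) (fderiv ℝ (fderiv ℝ N) z) z :=
    (hg.differentiableAt (by simp)).hasFDerivAt
  have := h1.clm_apply (hasFDerivAt_const a z)
  simpa using this

lemma aux_hP (N : ℂ → ℍ) {z : ℂ} (hN : ContDiffAt ℝ (⊤ : ℕ∞) N z) (a : ℂ) :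
    HasFDerivAt (fun w => N w * fderiv ℝ N w a)
      (N z • ((fderiv ℝ (fderiv ℝ N) z).flip a)
        + (fderiv ℝ N z).smulRight (fderiv ℝ N z a)) z :=
  (hN.differentiableAt (by simp)).hasFDerivAt.mul'
    (aux_hQ N hN a)

theorem stmt_0 (U : Set ℂ) (hU : IsOpen U) (N : ℂ → ℍ)
    (hsmooth : ContDiffOn ℝ (⊤ : ℕ∞) N U)
    (hre : ∀ z ∈ U, (N z).re = 0)
    (hsq : ∀ z ∈ U, N z * N z = -1) :
    (∀ z ∈ U, dx (dx N) z + dy (dy N) z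
        = N z * (dx N z * dx N z + dy N z * dy N z))
    ↔ (∀ z ∈ U,
        dx (fun w => N w * dx N w + dy N w) z
          + dy (fun w => N w * dy N w - dx N w) z = 0) := by
  have key : ∀ z ∈ U,
      dx (fun w => N w * dx N w + dy N w) z
        + dy (fun w => N w * dy N w - dx N w) z
      = dx N z * dx N z + dy N z * dy N z
        + N z * (dx (dx N) z + dy (dy N) z) := by
    intro z hz
    have hN : ContDiffAt ℝ (⊤ : ℕ∞) N z := hsmooth.contDiffAt (hU.mem_nhds hz)
    have hsym : ∀ v w, fderiv ℝ (fderiv ℝ N) z v w = fderiv ℝ (fderiv ℝ N) z w v :=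
      hN.isSymmSndFDerivAt (by
        rw [minSmoothness_of_isRCLikeNormedField]
        rw [show ((2 : WithTop ℕ∞)) = ((2 : ℕ∞) : WithTop ℕ∞) by norm_cast]
        exact_mod_cast (le_top : (2 : ℕ∞) ≤ ⊤))
    have h1 := (aux_hP N hN 1).add (aux_hQ N hN Complex.I)
    have h2 := (aux_hP N hN Complex.I).sub (aux_hQ N hN 1)
    have e1 : dx (fun w => N w * dx N w + dy N w) z
        = dx N z * dx N z + N z * fderiv ℝ (fderiv ℝ N) z 1 1
          + fderiv ℝ (fderiv ℝ N) z 1 Complex.I := by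
      have := h1.fderiv
      simp only [Pi.add_def] at this
      simp only [dx, dy, this, ContinuousLinearMap.add_apply,
        ContinuousLinearMap.smul_apply, ContinuousLinearMap.smulRight_apply,
        ContinuousLinearMap.flip_apply, smul_eq_mul]
      abel
    have e2 : dy (fun w => N w * dy N w - dx N w) z
        = dy N z * dy N z + N z * fderiv ℝ (fderiv ℝ N) z Complex.I Complex.I
          - fderiv ℝ (fderiv ℝ N) z Complex.I 1 := by
      have := h2.fderiv
      simp only [Pi.sub_def] at this
      simp only [dx, dy, this, ContinuousLinearMap.sub_apply,
        ContinuousLinearMap.add_apply,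
        ContinuousLinearMap.smul_apply, ContinuousLinearMap.smulRight_apply,
        ContinuousLinearMap.flip_apply, smul_eq_mul]
      abel
    have e3 : dx (dx N) z = fderiv ℝ (fderiv ℝ N) z 1 1 := by
      show fderiv ℝ (fun w => fderiv ℝ N w 1) z 1 = _
      rw [(aux_hQ N hN 1).fderiv]
      simp
    have e4 : dy (dy N) z = fderiv ℝ (fderiv ℝ N) z Complex.I Complex.I := by
      show fderiv ℝ (fun w => fderiv ℝ N w Complex.I) z Complex.I = _
      rw [(aux_hQ N hN Complex.I).fderiv]
      simp
    rw [e1, e2, e3, e4, hsym 1 Complex.I]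
    noncomm_ring
  constructor
  · intro h z hz
    rw [key z hz, h z hz, ← mul_assoc, hsq z hz]
    noncomm_ring
  · intro h z hz
    have hk := key z hz
    rw [h z hz] at hk
    have hNS : N z * (dx (dx N) z + dy (dy N) z)
        = -(dx N z * dx N z + dy N z * dy N z) := by
      rw [eq_neg_iff_add_eq_zero, add_comm]
      exact hk.symm
    have h3 := congrArg (fun q => N z * q) hNS
    simp only [← mul_assoc, hsq z hz, mul_neg, neg_one_mul, neg_inj] at h3
    exact h3
end
end

section
/- Let U ⊆ ℂ be open, N : U → ℍ smooth with Re N = 0 and N² = −1 pointwise. Let μ ∈ ℂ with μ ∉ {0, 1}, a = (μ+μ⁻¹)/2, b = i(μ⁻¹−μ)/2 ∈ ℂ ⊂ ℍ. Let φ : U → ℍ be smooth and nowhere vanishing, T = ½(N·φ·(a−1)·φ⁻¹ + φ·b·φ⁻¹), and suppose ∂xφ = ½(N_x − N·N_y)·T·φ and ∂yφ = ½(N_y + N·N_x)·T·φ on U. Set â = φ·a·φ⁻¹. Then T satisfies the Riccati-type equations ∂xT = ½(N_x + N·N_y)·(â−1)/2 − T·½(N_x − N·N_y)·T and ∂yT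 = ½(N_y − N·N_x)·(â−1)/2 − T·½(N_y + N·N_x)·T on U. (Equation (5.3) of the paper: dT = (dN)''(â−1)/2 − T(dN)'T.) -/
/- Equation (5.3) of the paper: the Riccati-type equation
dT = (dN)''(â−1)/2 − T(dN)'T satisfied by T along a d_μ-parallel section. -/

noncomputable section
open Complex

local notation "ℍ" => Quaternion ℝ

/-- Embedding of ℂ into ℍ as the real span of 1 and i. -/
def cq (z : ℂ) : ℍ := ⟨z.re, z.im, 0, 0⟩

/-- a = (μ+μ⁻¹)/2. -/
def aμ (μ : ℂ) : ℂ := (μ + μ⁻¹) / 2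

/-- b = i(μ⁻¹−μ)/2. -/
def bμ (μ : ℂ) : ℂ := Complex.I * (μ⁻¹ - μ) / 2

/-- T = ½(N·φ·(a−1)·φ⁻¹ + φ·b·φ⁻¹). -/
def Tmap (N φ : ℂ → ℍ) (μ : ℂ) (z : ℂ) : ℍ :=
  (N z * (φ z * cq (aμ μ - 1) * (φ z)⁻¹) + φ z * cq (bμ μ) * (φ z)⁻¹) / 2

/-- â = φ·a·φ⁻¹. -/
def ahat (φ : ℂ → ℍ) (μ : ℂ) (z : ℂ) : ℍ := φ z * cq (aμ μ) * (φ z)⁻¹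

lemma hq2 : (2:ℍ) ≠ 0 := by
  have h2 : ((2:ℝ):ℍ) ≠ ((0:ℝ):ℍ) :=
    fun h => by have := Quaternion.coe_injective h; norm_num at this
  exact_mod_cast h2

lemma half_double (x : ℍ) : 2 * (x / 2) = x := by
  rw [div_eq_mul_inv, ← mul_assoc, two_mul, ← mul_two, mul_assoc, mul_inv_cancel₀ hq2, mul_one]

lemma cq_re (z : ℂ) : (cq z).re = z.re := rfl
lemma cq_imI (z : ℂ) : (cq z).imI = z.im := rfl
lemma cq_imJ (z : ℂ) : (cq z).imJ = 0 := rfl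
lemma cq_imK (z : ℂ) : (cq z).imK = 0 := rfl

lemma cq_mul (z w : ℂ) : cq (z * w) = cq z * cq w := by
  ext <;> simp [cq_re, cq_imI, cq_imJ, cq_imK]

lemma cq_add (z w : ℂ) : cq (z + w) = cq z + cq w := by ext <;> simp [cq_re, cq_imI, cq_imJ, cq_imK]
lemma cq_zero : cq 0 = 0 := by ext <;> rfl

/-- The key directional derivative formula for `Tmap`. -/
lemma Tmap_dir (N φ : ℂ → ℍ) (μ : ℂ) (z v : ℂ) (w : ℍ)
    (hN : DifferentiableAt ℝ N z) (hφ : DifferentiableAt ℝ φ z) (hp : φ z ≠ 0)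
    (hw : fderiv ℝ φ z v = w * φ z) :
    fderiv ℝ (Tmap N φ μ) z v =
      (fderiv ℝ N z v * (φ z * cq (aμ μ - 1) * (φ z)⁻¹)
       + N z * (w * (φ z * cq (aμ μ - 1) * (φ z)⁻¹) - (φ z * cq (aμ μ - 1) * (φ z)⁻¹) * w)
       + (w * (φ z * cq (bμ μ) * (φ z)⁻¹) - (φ z * cq (bμ μ) * (φ z)⁻¹) * w)) / 2 := by
  have hinv : HasFDerivAt (fun u => (φ u)⁻¹)
      ((-ContinuousLinearMap.mulLeftRight ℝ ℍ (φ z)⁻¹ (φ z)⁻¹).comp (fderiv ℝ φ z)) z :=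
    (hasFDerivAt_inv' hp).comp z hφ.hasFDerivAt
  have hA : HasFDerivAt (fun u => φ u * cq (aμ μ - 1) * (φ u)⁻¹)
      ((φ z * cq (aμ μ - 1)) • ((-ContinuousLinearMap.mulLeftRight ℝ ℍ (φ z)⁻¹ (φ z)⁻¹).comp (fderiv ℝ φ z))
        + ((fderiv ℝ φ z).smulRight (cq (aμ μ - 1))).smulRight ((φ z)⁻¹)) z :=
    (hφ.hasFDerivAt.mul_const' _).mul' hinv
  have hB : HasFDerivAt (fun u => φ u * cq (bμ μ) * (φ u)⁻¹)
      ((φ z * cq (bμ μ)) • ((-ContinuousLinearMap.mulLeftRight ℝ ℍ (φ z)⁻¹ (φ z)⁻¹).comp (fderiv ℝ φ z))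
        + ((fderiv ℝ φ z).smulRight (cq (bμ μ))).smulRight ((φ z)⁻¹)) z :=
    (hφ.hasFDerivAt.mul_const' _).mul' hinv
  have hNA := hN.hasFDerivAt.mul' hA
  have hT := ((hNA.add hB).mul_const' ((2:ℍ)⁻¹))
  have hTm : Tmap N φ μ = fun u =>
      (N u * (φ u * cq (aμ μ - 1) * (φ u)⁻¹) + φ u * cq (bμ μ) * (φ u)⁻¹) * (2:ℍ)⁻¹ := by
    funext u; rw [Tmap, div_eq_mul_inv]
  rw [hTm]
  erw [hT.fderiv]
  simp only [ContinuousLinearMap.add_apply, ContinuousLinearMap.smulRight_apply,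
    ContinuousLinearMap.smul_apply, ContinuousLinearMap.comp_apply,
    ContinuousLinearMap.neg_apply, ContinuousLinearMap.mulLeftRight_apply,
    smul_eq_mul, hw, div_eq_mul_inv, MulOpposite.smul_eq_mul_unop, MulOpposite.unop_op]
  have h1 : (φ z)⁻¹ * (w * φ z) * (φ z)⁻¹ = (φ z)⁻¹ * w := by
    rw [mul_assoc ((φ z)⁻¹) (w * φ z) ((φ z)⁻¹), mul_assoc w (φ z) ((φ z)⁻¹),
      mul_inv_cancel₀ hp, mul_one]
  rw [h1]
  noncomm_ring

/-- The purely algebraic Riccati identity. -/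
lemma riccati_alg (n α β nx t P Q : ℍ)
    (hn : n * n = -1)
    (hPn : n * P + P * n = 0)
    (hPQ : P + Q = nx)
    (ht : 2 * t = n * α + β)
    (hαβ : α * β = β * α)
    (hkey : 2 * α + α * α + β * β = 0) :
    (nx * α + n * (P * t * α - α * (P * t)) + (P * t * β - β * (P * t))) / 2
      = Q * (α / 2) - t * (P * t) := by
  have L1 : α - n * (t * α) + t * β = 0 := by
    have e : 2 * (α - n * (t * α) + t * β)
        = (2 * α + α * α + β * β) + n * (α * β - β * α) - (n * n - -1) * (α * α)
          - (n * (2 * t - (n * α + β))) * α + (2 * t - (n * α + β)) * β := by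
      noncomm_ring
    have e0 : 2 * (α - n * (t * α) + t * β) = 0 := by
      rw [e, hkey, hαβ, hn, ht]; simp
    rcases mul_eq_zero.mp e0 with h | h
    · exact absurd h hq2
    · exact h
  apply mul_left_cancel₀ hq2
  rw [half_double, show Q * (α / 2) = (Q * α) / 2 by rw [mul_div_assoc],
    mul_sub 2 ((Q * α) / 2) (t * (P * t)), half_double]
  have e3 : (nx * α + n * (P * t * α - α * (P * t)) + (P * t * β - β * (P * t)))
        - (Q * α - 2 * (t * (P * t)))
      = (nx - (P + Q)) * α + (2 * t - (n * α + β)) * (P * t) + (n * P + P * n) * (t * α)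
        + P * (α - n * (t * α) + t * β) := by
    noncomm_ring
  have h0 : (nx * α + n * (P * t * α - α * (P * t)) + (P * t * β - β * (P * t)))
      - (Q * α - 2 * (t * (P * t))) = 0 := by
    rw [e3, hPQ, ht, hPn, L1]; simp
  exact sub_eq_zero.mp h0

theorem stmt_4 (U : Set ℂ) (hU : IsOpen U)
    (N : ℂ → ℍ) (hsmooth : ContDiffOn ℝ (⊤ : ℕ∞) N U)
    (hre : ∀ z ∈ U, (N z).re = 0)
    (hsq : ∀ z ∈ U, N z * N z = -1)
    (μ : ℂ) (hμ0 : μ ≠ 0) (hμ1 : μ ≠ 1)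
    (φ : ℂ → ℍ) (hφsmooth : ContDiffOn ℝ (⊤ : ℕ∞) φ U)
    (hφ0 : ∀ z ∈ U, φ z ≠ 0)
    (hparx : ∀ z ∈ U, dx φ z = ((dx N z - N z * dy N z) / 2) * Tmap N φ μ z * φ z)
    (hpary : ∀ z ∈ U, dy φ z = ((dy N z + N z * dx N z) / 2) * Tmap N φ μ z * φ z) :
    ∀ z ∈ U,
      dx (Tmap N φ μ) z
        = ((dx N z + N z * dy N z) / 2) * ((ahat φ μ z - 1) / 2)
          - Tmap N φ μ z * (((dx N z - N z * dy N z) / 2) * Tmap N φ μ z)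
      ∧ dy (Tmap N φ μ) z
        = ((dy N z - N z * dx N z) / 2) * ((ahat φ μ z - 1) / 2)
          - Tmap N φ μ z * (((dy N z + N z * dx N z) / 2) * Tmap N φ μ z) := by
  intro z hz
  have hNd : DifferentiableAt ℝ N z :=
    (hsmooth.contDiffAt (hU.mem_nhds hz)).differentiableAt (by simp)
  have hφd : DifferentiableAt ℝ φ z :=
    (hφsmooth.contDiffAt (hU.mem_nhds hz)).differentiableAt (by simp)
  have hp : φ z ≠ 0 := hφ0 z hz
  -- anticommutation of N with its derivatives
  have hNN : fderiv ℝ (fun u => N u * N u) z = 0 := by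
    have hev : (fun u => N u * N u) =ᶠ[nhds z] fun _ => (-1:ℍ) :=
      Filter.eventuallyEq_of_mem (hU.mem_nhds hz) hsq
    rw [hev.fderiv_eq]
    simp
  have hanti : ∀ v : ℂ, N z * fderiv ℝ N z v + fderiv ℝ N z v * N z = 0 := by
    intro v
    have h1 := (hNd.hasFDerivAt.mul' hNd.hasFDerivAt).fderiv
    erw [hNN] at h1
    have h2 := congrArg (fun L : ℂ →L[ℝ] ℍ => L v) h1.symm
    simpa [smul_eq_mul, add_comm] using h2
  have hantix : N z * dx N z + dx N z * N z = 0 := hanti 1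
  have hantiy : N z * dy N z + dy N z * N z = 0 := hanti Complex.I
  have hn : N z * N z = -1 := hsq z hz
  -- conjugation facts
  have hconj_mul : ∀ c d : ℂ,
      (φ z * cq c * (φ z)⁻¹) * (φ z * cq d * (φ z)⁻¹) = φ z * cq (c * d) * (φ z)⁻¹ := by
    intro c d
    simp [cq_mul, mul_assoc, inv_mul_cancel_left₀ hp]
  have hαβ : (φ z * cq (aμ μ - 1) * (φ z)⁻¹) * (φ z * cq (bμ μ) * (φ z)⁻¹)
      = (φ z * cq (bμ μ) * (φ z)⁻¹) * (φ z * cq (aμ μ - 1) * (φ z)⁻¹) := by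
    rw [hconj_mul, hconj_mul, mul_comm (aμ μ - 1) (bμ μ)]
  have hkey : 2 * (φ z * cq (aμ μ - 1) * (φ z)⁻¹)
      + (φ z * cq (aμ μ - 1) * (φ z)⁻¹) * (φ z * cq (aμ μ - 1) * (φ z)⁻¹)
      + (φ z * cq (bμ μ) * (φ z)⁻¹) * (φ z * cq (bμ μ) * (φ z)⁻¹) = 0 := by
    have hc : (aμ μ - 1) + (aμ μ - 1) + ((aμ μ - 1) * (aμ μ - 1) + bμ μ * bμ μ) = 0 := by
      rw [aμ, bμ]
      field_simp
      ring_nf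
      rw [Complex.I_sq]
      ring
    have e : 2 * (φ z * cq (aμ μ - 1) * (φ z)⁻¹)
        + (φ z * cq (aμ μ - 1) * (φ z)⁻¹) * (φ z * cq (aμ μ - 1) * (φ z)⁻¹)
        + (φ z * cq (bμ μ) * (φ z)⁻¹) * (φ z * cq (bμ μ) * (φ z)⁻¹)
        = φ z * cq ((aμ μ - 1) + (aμ μ - 1) + ((aμ μ - 1) * (aμ μ - 1) + bμ μ * bμ μ)) * (φ z)⁻¹ := by
      rw [hconj_mul, hconj_mul, cq_add, cq_add, cq_add]
      noncomm_ring
    rw [e, hc, cq_zero, mul_zero, zero_mul]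
  have ht : 2 * Tmap N φ μ z
      = N z * (φ z * cq (aμ μ - 1) * (φ z)⁻¹) + φ z * cq (bμ μ) * (φ z)⁻¹ := by
    rw [Tmap, half_double]
  have hα1 : ahat φ μ z - 1 = φ z * cq (aμ μ - 1) * (φ z)⁻¹ := by
    rw [show cq (aμ μ - 1) = cq (aμ μ) - 1 from by ext <;> simp [cq_re, cq_imI, cq_imJ, cq_imK, Quaternion.re_one, Quaternion.imI_one, Quaternion.imJ_one, Quaternion.imK_one],
      mul_sub, mul_one, sub_mul, mul_inv_cancel₀ hp, ahat]
  constructor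
  · -- x direction
    have hPn : N z * ((dx N z - N z * dy N z) / 2) + ((dx N z - N z * dy N z) / 2) * N z = 0 := by
      have e0 : 2 * (N z * ((dx N z - N z * dy N z) / 2)
          + ((dx N z - N z * dy N z) / 2) * N z) = 0 := by
        rw [show 2 * (N z * ((dx N z - N z * dy N z) / 2)
              + ((dx N z - N z * dy N z) / 2) * N z)
            = N z * (2 * ((dx N z - N z * dy N z) / 2))
              + (2 * ((dx N z - N z * dy N z) / 2)) * N z from by noncomm_ring,
          half_double,
          show N z * (dx N z - N z * dy N z) + (dx N z - N z * dy N z) * N z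
            = (N z * dx N z + dx N z * N z)
              - N z * (N z * dy N z + dy N z * N z) from by noncomm_ring,
          hantix, hantiy]
        simp
      rcases mul_eq_zero.mp e0 with h | h
      · exact absurd h hq2
      · exact h
    have hPQ : (dx N z - N z * dy N z) / 2 + (dx N z + N z * dy N z) / 2 = dx N z := by
      apply mul_left_cancel₀ hq2
      rw [mul_add, half_double, half_double]
      noncomm_ring
    have hd := Tmap_dir N φ μ z 1 (((dx N z - N z * dy N z) / 2) * Tmap N φ μ z)
      hNd hφd hp (hparx z hz)
    rw [show dx (Tmap N φ μ) z = fderiv ℝ (Tmap N φ μ) z 1 from rfl, hd, hα1,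
      show (fderiv ℝ N z) 1 = dx N z from rfl]
    exact riccati_alg (N z) (φ z * cq (aμ μ - 1) * (φ z)⁻¹) (φ z * cq (bμ μ) * (φ z)⁻¹)
      (dx N z) (Tmap N φ μ z) ((dx N z - N z * dy N z) / 2) ((dx N z + N z * dy N z) / 2)
      hn hPn hPQ ht hαβ hkey
  · -- y direction
    have hPn : N z * ((dy N z + N z * dx N z) / 2) + ((dy N z + N z * dx N z) / 2) * N z = 0 := by
      have e0 : 2 * (N z * ((dy N z + N z * dx N z) / 2)
          + ((dy N z + N z * dx N z) / 2) * N z) = 0 := by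
        rw [show 2 * (N z * ((dy N z + N z * dx N z) / 2)
              + ((dy N z + N z * dx N z) / 2) * N z)
            = N z * (2 * ((dy N z + N z * dx N z) / 2))
              + (2 * ((dy N z + N z * dx N z) / 2)) * N z from by noncomm_ring,
          half_double,
          show N z * (dy N z + N z * dx N z) + (dy N z + N z * dx N z) * N z
            = (N z * dy N z + dy N z * N z)
              + N z * (N z * dx N z + dx N z * N z) from by noncomm_ring,
          hantix, hantiy]
        simp
      rcases mul_eq_zero.mp e0 with h | h
      · exact absurd h hq2
      · exact h
    have hPQ : (dy N z + N z * dx N z) / 2 + (dy N z - N z * dx N z) / 2 = dy N z := by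
      apply mul_left_cancel₀ hq2
      rw [mul_add, half_double, half_double]
      noncomm_ring
    have hd := Tmap_dir N φ μ z Complex.I (((dy N z + N z * dx N z) / 2) * Tmap N φ μ z)
      hNd hφd hp (hpary z hz)
    rw [show dy (Tmap N φ μ) z = fderiv ℝ (Tmap N φ μ) z Complex.I from rfl, hd, hα1,
      show (fderiv ℝ N z) Complex.I = dy N z from rfl]
    exact riccati_alg (N z) (φ z * cq (aμ μ - 1) * (φ z)⁻¹) (φ z * cq (bμ μ) * (φ z)⁻¹)
      (dy N z) (Tmap N φ μ z) ((dy N z + N z * dx N z) / 2) ((dy N z - N z * dx N z) / 2)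
      hn hPn hPQ ht hαβ hkey
end
end

section
/- Let μ ∈ ℂ with μ ∉ {0, 1}, and set a = (μ+μ⁻¹)/2, b = i(μ⁻¹−μ)/2, regarded as quaternions in the real span of 1 and i. Let n ∈ ℍ with Re n = 0 and n² = −1, and let φ ∈ ℍ, φ ≠ 0. Then T := ½(n·φ·(a−1)·φ⁻¹ + φ·b·φ⁻¹) ≠ 0 (hence T is an invertible quaternion). (Nonvanishing of T in Theorems 5.1 and 5.2.) -/
/- Nonvanishing of T = ½(n·φ·(a−1)·φ⁻¹ + φ·b·φ⁻¹) in Theorems 5.1 and 5.2. -/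

noncomputable section
open Complex

local notation "ℍ" => Quaternion ℝ

lemma cq_inj {z w : ℂ} (h : cq z = cq w) : z = w := by
  have h1 := congrArg QuaternionAlgebra.re h
  have h2 := congrArg QuaternionAlgebra.imI h
  simp [cq] at h1 h2
  exact Complex.ext h1 h2

lemma cq_neg_one : cq (-1) = -1 := by ext <;> simp [cq] <;> rfl

lemma sq_zero {z : ℂ} (h : z ^ 2 = 0) : z = 0 :=
  (pow_eq_zero_iff two_ne_zero).mp h

theorem stmt_5 (μ : ℂ) (hμ0 : μ ≠ 0) (hμ1 : μ ≠ 1)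
    (n : ℍ) (hre : n.re = 0) (hsq : n * n = -1)
    (φ : ℍ) (hφ : φ ≠ 0) :
    (n * (φ * cq (aμ μ - 1) * φ⁻¹) + φ * cq (bμ μ) * φ⁻¹) / 2 ≠ 0 := by
  intro hT
  rw [div_eq_zero_iff] at hT
  have hX : n * (φ * cq (aμ μ - 1) * φ⁻¹) + φ * cq (bμ μ) * φ⁻¹ = 0 :=
    hT.resolve_right (by
      have : ((2:ℝ) : ℍ) ≠ 0 :=
        by simpa using (Quaternion.coe_injective.ne_iff.mpr (two_ne_zero : (2:ℝ) ≠ 0))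
      exact_mod_cast this)
  have ha : aμ μ - 1 ≠ 0 := by
    intro h
    unfold aμ at h
    field_simp at h
    have : (μ - 1) ^ 2 = 0 := by linear_combination h
    exact hμ1 (by linear_combination sq_zero this)
  have hca : cq (aμ μ - 1) ≠ 0 := fun h => ha (cq_inj (h.trans cq_zero.symm))
  set c : ℂ := bμ μ / (aμ μ - 1) with hc
  have hbc : cq (bμ μ) = cq c * cq (aμ μ - 1) := by
    rw [← cq_mul, div_mul_cancel₀ _ ha]
  have h3 : n * (φ * cq (aμ μ - 1)) + φ * cq (bμ μ) = 0 := by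
    have := congrArg (· * φ) hX
    simpa [add_mul, mul_assoc, inv_mul_cancel₀ hφ] using this
  have h5 : (n * φ + φ * cq c) * cq (aμ μ - 1) = 0 := by
    rw [hbc] at h3
    rw [add_mul, mul_assoc, mul_assoc]
    exact h3
  have h6 : n * φ = -(φ * cq c) :=
    eq_neg_of_add_eq_zero_left ((mul_eq_zero.mp h5).resolve_right hca)
  have h8 : φ * (cq c * cq c) = -φ := by
    have e1 : n * (n * φ) = -φ := by rw [← mul_assoc, hsq, neg_one_mul]
    rw [show n * φ = -(φ * cq c) from h6, mul_neg, ← mul_assoc, h6] at e1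
    simpa [neg_mul, mul_assoc] using e1
  have h9 : c * c = -1 := by
    have : φ * (cq (c * c) + 1) = 0 := by
      rw [cq_mul, mul_add, mul_one, h8, neg_add_cancel]
    have h10 : cq (c * c) = -1 :=
      eq_neg_of_add_eq_zero_left ((mul_eq_zero.mp this).resolve_left hφ)
    exact cq_inj (h10.trans cq_neg_one.symm)
  rw [hc, div_mul_div_comm, div_eq_iff (mul_ne_zero ha ha)] at h9
  unfold aμ bμ at h9
  field_simp at h9
  have key : μ * (μ - 1) ^ 2 = 0 := by linear_combination (-1/4) * h9 + ((1 - μ * μ) ^ 2 / 4) * Complex.I_sq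
  rcases mul_eq_zero.mp key with h | h
  · exact hμ0 h
  · exact hμ1 (by linear_combination sq_zero h)
end
end

section
/- Let μ ∈ ℂ with |μ| = 1 and μ ≠ 1, so that a = (μ+μ⁻¹)/2 and b = i(μ⁻¹−μ)/2 are real and a ≠ 1. Let n ∈ ℍ with Re n = 0 and n² = −1, and set T = ½(n·(a−1) + b) ∈ ℍ. Then T·(n + b/(1−a)) = 1 = (n + b/(1−a))·T (so T is invertible with T⁻¹ = n + b/(1−a)), T commutes with n, and consequently T⁻¹·n·T = n. (The μ ∈ S¹ case: T is independent of the parallel section, T⁻¹ = N + b/(1−a), and the μ-Darboux transform of the harmonic map is trivial.) -/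
/- The μ ∈ S¹ case of the μ-Darboux transformation: T = ½(n(a−1) + b) is
independent of the parallel section, T⁻¹ = n + b/(1−a), T commutes with n,
and the μ-Darboux transform of the harmonic map is trivial. -/

noncomputable section
open Complex

local notation "ℍ" => Quaternion ℝ

/-- T = ½(n·(a−1) + b) for μ ∈ S¹. -/
def TS1 (μ : ℂ) (n : ℍ) : ℍ := (n * cq (aμ μ - 1) + cq (bμ μ)) / 2

private lemma quat_simp_aux (A B C : ℝ) (n : ℍ) (hre : n.re = 0)
    (hxyz : n.imI ^ 2 + n.imJ ^ 2 + n.imK ^ 2 = 1)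
    (hBC : B * C = 1 + A) (hC : C * (1 - A) = B) :
    ((2⁻¹ : ℝ) • (n * ((A - 1 : ℝ) : ℍ) + ((B : ℝ) : ℍ))) * (n + ((C : ℝ) : ℍ)) = 1
    ∧ (n + ((C : ℝ) : ℍ)) * ((2⁻¹ : ℝ) • (n * ((A - 1 : ℝ) : ℍ) + ((B : ℝ) : ℍ))) = 1
    ∧ ((2⁻¹ : ℝ) • (n * ((A - 1 : ℝ) : ℍ) + ((B : ℝ) : ℍ))) * n
      = n * ((2⁻¹ : ℝ) • (n * ((A - 1 : ℝ) : ℍ) + ((B : ℝ) : ℍ))) := by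
  refine ⟨?_, ?_, ?_⟩ <;>
    (ext <;>
      simp only [Quaternion.re_mul, Quaternion.imI_mul, Quaternion.imJ_mul, Quaternion.imK_mul,
        Quaternion.re_add, Quaternion.imI_add, Quaternion.imJ_add, Quaternion.imK_add,
        Quaternion.re_coe, Quaternion.imI_coe, Quaternion.imJ_coe, Quaternion.imK_coe,
        Quaternion.re_smul, Quaternion.imI_smul, Quaternion.imJ_smul, Quaternion.imK_smul,
        smul_mul_assoc, mul_smul_comm, Quaternion.re_one, Quaternion.imI_one, Quaternion.imJ_one,
        Quaternion.imK_one, hre, smul_eq_mul])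
  · linear_combination ((1 - A) / 2) * hxyz + (1 / 2) * hBC
  · linear_combination (-(n.imI / 2)) * hC
  · linear_combination (-(n.imJ / 2)) * hC
  · linear_combination (-(n.imK / 2)) * hC
  · linear_combination ((1 - A) / 2) * hxyz + (1 / 2) * hBC
  · linear_combination (-(n.imI / 2)) * hC
  · linear_combination (-(n.imJ / 2)) * hC
  · linear_combination (-(n.imK / 2)) * hC
  all_goals ring

theorem stmt_8 (μ : ℂ) (habs : ‖μ‖ = 1) (hμ1 : μ ≠ 1)
    (n : ℍ) (hre : n.re = 0) (hsq : n * n = -1) :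
    (aμ μ).im = 0 ∧ (bμ μ).im = 0 ∧ aμ μ ≠ 1
    ∧ TS1 μ n * (n + cq (bμ μ / (1 - aμ μ))) = 1
    ∧ (n + cq (bμ μ / (1 - aμ μ))) * TS1 μ n = 1
    ∧ (TS1 μ n)⁻¹ = n + cq (bμ μ / (1 - aμ μ))
    ∧ TS1 μ n * n = n * TS1 μ n
    ∧ (TS1 μ n)⁻¹ * n * TS1 μ n = n := by
  have hinv : μ⁻¹ = (starRingEnd ℂ) μ := Complex.inv_eq_conj habs
  have ha : aμ μ = ((μ.re : ℝ) : ℂ) := by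
    simp only [aμ, hinv]
    apply Complex.ext <;> simp
  have hb : bμ μ = ((μ.im : ℝ) : ℂ) := by
    simp only [bμ, hinv]
    apply Complex.ext <;> simp
  have hnorm : μ.re ^ 2 + μ.im ^ 2 = 1 := by
    have h := Complex.sq_norm μ
    rw [habs, Complex.normSq_apply] at h
    nlinarith
  have hane : μ.re ≠ 1 := by
    intro h
    apply hμ1
    have h2 : μ.im ^ 2 = 0 := by nlinarith
    exact Complex.ext h (pow_eq_zero_iff (by norm_num) |>.mp h2)
  have hsubne : (1 : ℝ) - μ.re ≠ 0 := sub_ne_zero.mpr (Ne.symm hane)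
  have hc : ∀ r : ℝ, cq ((r : ℝ) : ℂ) = ((r : ℝ) : ℍ) := by
    intro r; ext <;> simp [cq]
  have hT : TS1 μ n = (2⁻¹ : ℝ) • (n * ((μ.re - 1 : ℝ) : ℍ) + ((μ.im : ℝ) : ℍ)) := by
    rw [TS1, show aμ μ - 1 = ((μ.re - 1 : ℝ) : ℂ) by rw [ha]; push_cast; ring, hb, hc, hc,
      div_eq_mul_inv, show (2 : ℍ) = ((2 : ℝ) : ℍ) by norm_cast, ← Quaternion.coe_inv,
      ← (Quaternion.coe_commute (2⁻¹ : ℝ) _).eq, Quaternion.coe_mul_eq_smul]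
  have hcq2 : cq (bμ μ / (1 - aμ μ)) = ((μ.im / (1 - μ.re) : ℝ) : ℍ) := by
    rw [show bμ μ / (1 - aμ μ) = ((μ.im / (1 - μ.re) : ℝ) : ℂ) by
      rw [ha, hb]; push_cast; ring, hc]
  have hxyz : n.imI ^ 2 + n.imJ ^ 2 + n.imK ^ 2 = 1 := by
    have h := congrArg QuaternionAlgebra.re hsq
    simp [Quaternion.re_mul, hre, Quaternion.re_one] at h
    nlinarith
  have hBC : μ.im * (μ.im / (1 - μ.re)) = 1 + μ.re := by
    field_simp
    linear_combination hnorm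
  have hCC : (μ.im / (1 - μ.re)) * (1 - μ.re) = μ.im := by field_simp
  obtain ⟨k1, k2, k3⟩ := quat_simp_aux μ.re μ.im (μ.im / (1 - μ.re)) n hre hxyz hBC hCC
  rw [hT, hcq2] at *
  have hinvT : ((2⁻¹ : ℝ) • (n * ((μ.re - 1 : ℝ) : ℍ) + ((μ.im : ℝ) : ℍ)))⁻¹
      = n + ((μ.im / (1 - μ.re) : ℝ) : ℍ) := inv_eq_of_mul_eq_one_right k1
  refine ⟨by rw [ha]; simp, by rw [hb]; simp,
    fun h => hane (by rw [ha] at h; exact_mod_cast h), k1, k2, hinvT, k3, ?_⟩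
  rw [hinvT]
  have hcomm : (n + ((μ.im / (1 - μ.re) : ℝ) : ℍ)) * n
      = n * (n + ((μ.im / (1 - μ.re) : ℝ) : ℍ)) := by
    rw [add_mul, mul_add, (Quaternion.coe_commute _ n).eq]
  rw [hcomm, mul_assoc, k2, mul_one]
end
end

section
/- Let μ ∈ ℂ with μ ∉ {0, 1}, a = (μ+μ⁻¹)/2, b = i(μ⁻¹−μ)/2, regarded as quaternions in the real span of 1 and i. Let n ∈ ℍ with Re n = 0 and n² = −1, φ ∈ ℍ \ {0}, T = ½(n·φ·(a−1)·φ⁻¹ + φ·b·φ⁻¹) (which is nonzero, hence invertible), ρ̂ = φ·((1−a)/2)·φ⁻¹, T̂ = T·ρ̂⁻¹, and N̂ = T⁻¹·n·T. Then N̂·(T̂·ψ) = T̂·(n·ψ) for every ψ ∈ ℍ; in particular, left multiplication by T̂ maps E = {ψ ∈ ℍ : n·ψ = ψ·i} bijectively onto Ê = {ψ ∈ ℍ : N̂·ψ = ψ·i}, i.e. T̂·E = Ê. (The +i eigenspace of the μ-Darboux transform N̂ is T̂E; proof of Theorem 6.1.) -/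
/- The +i eigenspace of the μ-Darboux transform N̂ = T⁻¹nT is T̂E
(proof of Theorem 6.1): N̂·(T̂ψ) = T̂·(nψ), so left multiplication by T̂
maps E bijectively onto Ê. -/

noncomputable section
open Complex

local notation "ℍ" => Quaternion ℝ

/-- The quaternion unit i. -/
def qi : ℍ := ⟨0,1,0,0⟩

/-- T = ½(n·φ·(a−1)·φ⁻¹ + φ·b·φ⁻¹). -/
def Tq (μ : ℂ) (n φ : ℍ) : ℍ :=
  (n * (φ * cq (aμ μ - 1) * φ⁻¹) + φ * cq (bμ μ) * φ⁻¹) / 2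

/-- ρ̂ = φ·((1−a)/2)·φ⁻¹. -/
def ρhat (μ : ℂ) (φ : ℍ) : ℍ := φ * cq ((1 - aμ μ) / 2) * φ⁻¹

/-- T̂ = T·ρ̂⁻¹. -/
def That (μ : ℂ) (n φ : ℍ) : ℍ := Tq μ n φ * (ρhat μ φ)⁻¹

/-- N̂ = T⁻¹·n·T, the μ-Darboux transform. -/
def Nhat (μ : ℂ) (n φ : ℍ) : ℍ := (Tq μ n φ)⁻¹ * n * Tq μ n φ

lemma cq_neg (z : ℂ) : cq (-z) = -(cq z) := by ext <;> simp only [Quaternion.re_neg, Quaternion.imI_neg, Quaternion.imJ_neg, Quaternion.imK_neg] <;> simp [cq]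
lemma cq_sub (z w : ℂ) : cq (z - w) = cq z - cq w := by ext <;> simp only [Quaternion.re_sub, Quaternion.imI_sub, Quaternion.imJ_sub, Quaternion.imK_sub] <;> simp [cq]
lemma cq_one : cq 1 = 1 := by ext <;> simp [cq] <;> rfl
lemma cq_real (r : ℝ) : cq (r : ℂ) = (r : ℍ) := by ext <;> simp [cq]
lemma cq_two : cq 2 = 2 := by
  have h : ((2:ℝ):ℂ) = (2:ℂ) := by norm_cast
  have h2 : ((2:ℝ):ℍ) = (2:ℍ) := by norm_cast
  rw [← h, cq_real, h2]

lemma cq_eq_zero {z : ℂ} (h : cq z = 0) : z = 0 := by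
  have h1 := congrArg QuaternionAlgebra.re h
  have h2 := congrArg QuaternionAlgebra.imI h
  simp [cq] at h1 h2
  exact Complex.ext h1 h2

lemma cq_inv (z : ℂ) : cq z⁻¹ = (cq z)⁻¹ := by
  rcases eq_or_ne z 0 with h | h
  · simp [h, cq_zero]
  · refine (inv_eq_of_mul_eq_one_right ?_).symm
    rw [← cq_mul, mul_inv_cancel₀ h, cq_one]

/-- Main algebraic lemma. -/
lemma main_aux (n p q T ρ : ℍ) (hsq : n * n = -1) (hp0 : p ≠ 0)
    (hpq : p * q = q * p) (hq2 : q * q = -(p * p) - 2 * p)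
    (hT : T = (2⁻¹ : ℝ) • (n * p + q)) (hρ : ρ = (-(2⁻¹ : ℝ)) • p) :
    T ≠ 0 ∧ ρ ≠ 0 ∧ n * (T * T * ρ⁻¹) = (T * T * ρ⁻¹) * n := by
  have hA : (n*p+q)*(n*p+q) = (n*p*n + n*q + q*n - p - 2) * p := by
    have h1 : (n*p+q)*(n*p+q) = n*p*(n*p) + n*(p*q) + q*(n*p) + q*q := by noncomm_ring
    rw [h1, hpq, hq2]; noncomm_ring
  have hB : n * (n*p*n + n*q + q*n - p - 2) = (n*p*n + n*q + q*n - p - 2) * n := by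
    have h1 : n * (n*p*n + n*q + q*n - p - 2)
        = (n*n)*(p*n) + (n*n)*q + n*q*n - n*p - 2*n := by noncomm_ring
    have h2 : (n*p*n + n*q + q*n - p - 2) * n
        = n*p*(n*n) + n*q*n + q*(n*n) - p*n - 2*n := by noncomm_ring
    rw [h1, h2, hsq]; noncomm_ring
  have hT0 : T ≠ 0 := by
    rw [hT]
    intro h0
    have hx : n*p + q = 0 := by
      rcases smul_eq_zero.mp h0 with h | h
      · norm_num at h
      · exact h
    have hq_eq : q = -(n*p) := eq_neg_of_add_eq_zero_right hx
    have hn : q * p⁻¹ = -n := by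
      rw [hq_eq]; simp [mul_assoc, mul_inv_cancel₀ hp0]
    have hcpq : p⁻¹ * q = q * p⁻¹ := (Commute.inv_left₀ hpq).eq
    have hqq : q*q*(p⁻¹*p⁻¹) = -1 := by
      have e1 : (q*p⁻¹)*(q*p⁻¹) = -1 := by rw [hn, neg_mul_neg, hsq]
      calc q*q*(p⁻¹*p⁻¹) = q*(q*p⁻¹)*p⁻¹ := by noncomm_ring
        _ = q*(p⁻¹*q)*p⁻¹ := by rw [hcpq]
        _ = (q*p⁻¹)*(q*p⁻¹) := by noncomm_ring
        _ = -1 := e1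
    have e : (p⁻¹*p⁻¹)*(p*p) = 1 := by
      rw [show (p⁻¹*p⁻¹)*(p*p) = p⁻¹*((p⁻¹*p)*p) from by noncomm_ring,
        inv_mul_cancel₀ hp0, one_mul, inv_mul_cancel₀ hp0]
    have hqq2 : q*q = -(p*p) := by
      have h := congrArg (· * (p*p)) hqq
      try simp only at h
      rw [mul_assoc (q*q), e, mul_one, neg_one_mul] at h
      exact h
    have h2p : (2:ℍ)*p = 0 := by
      have h := hqq2.symm.trans hq2
      have h' : (2:ℍ)*p = -(p*p) - (-(p*p) - 2*p) := by noncomm_ring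
      rw [← h, sub_self] at h'
      exact h'
    rcases mul_eq_zero.mp h2p with h | h
    · have h2 : ((2:ℝ):ℍ) = (2:ℍ) := by norm_cast
      rw [← h2] at h
      have h0' : ((2:ℝ):ℍ) = ((0:ℝ):ℍ) := by rw [h]; norm_cast
      have := Quaternion.coe_injective h0'
      norm_num at this
    · exact hp0 h
  have hρ0 : ρ ≠ 0 := by
    rw [hρ]
    simp [smul_eq_zero, hp0]
  have hρinv : ρ⁻¹ = (-(2:ℝ)) • p⁻¹ := by
    rw [hρ, smul_inv₀]
    norm_num
  refine ⟨hT0, hρ0, ?_⟩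
  have hTTρ : T * T * ρ⁻¹ = (-(2⁻¹:ℝ)) • (n*p*n + n*q + q*n - p - 2) := by
    rw [hT, hρinv]
    simp only [smul_mul_assoc, mul_smul_comm, smul_smul]
    rw [hA]
    rw [show (n*p*n + n*q + q*n - p - 2) * p * p⁻¹
        = (n*p*n + n*q + q*n - p - 2) * (p * p⁻¹) from by noncomm_ring,
      mul_inv_cancel₀ hp0, mul_one]
    norm_num
  rw [hTTρ, mul_smul_comm, smul_mul_assoc, hB]

theorem stmt_11 (μ : ℂ) (hμ0 : μ ≠ 0) (hμ1 : μ ≠ 1)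
    (n : ℍ) (hre : n.re = 0) (hsq : n * n = -1)
    (φ : ℍ) (hφ : φ ≠ 0) :
    (∀ ψ : ℍ, Nhat μ n φ * (That μ n φ * ψ) = That μ n φ * (n * ψ))
    ∧ Set.BijOn (fun ψ => That μ n φ * ψ)
        {ψ : ℍ | n * ψ = ψ * qi} {ψ : ℍ | Nhat μ n φ * ψ = ψ * qi}
    ∧ (fun ψ => That μ n φ * ψ) '' {ψ : ℍ | n * ψ = ψ * qi}
        = {ψ : ℍ | Nhat μ n φ * ψ = ψ * qi} := by
  have hc : aμ μ - 1 ≠ 0 := by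
    intro h
    apply hμ1
    have h2 : (μ - 1) ^ 2 = 0 := by
      have h3 : (μ - 1) ^ 2 = μ * (aμ μ - 1) * 2 := by unfold aμ; field_simp; ring
      rw [h3, h, mul_zero, zero_mul]
    exact sub_eq_zero.mp (pow_eq_zero_iff (by norm_num : (2:ℕ) ≠ 0) |>.mp h2)
  have hb2 : bμ μ * bμ μ = -((aμ μ - 1) * (aμ μ - 1)) - 2 * (aμ μ - 1) := by
    unfold aμ bμ
    field_simp
    ring_nf
    linear_combination (1 - 2*μ^2 + μ^4) * Complex.I_sq
  have conj_mul : ∀ z w : ℂ,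
      (φ * cq z * φ⁻¹) * (φ * cq w * φ⁻¹) = φ * cq (z*w) * φ⁻¹ := by
    intro z w
    rw [cq_mul, show (φ * cq z * φ⁻¹) * (φ * cq w * φ⁻¹)
        = φ * cq z * ((φ⁻¹ * φ) * (cq w * φ⁻¹)) from by noncomm_ring,
      inv_mul_cancel₀ hφ, one_mul]
    noncomm_ring
  set p : ℍ := φ * cq (aμ μ - 1) * φ⁻¹ with hp_def
  set q : ℍ := φ * cq (bμ μ) * φ⁻¹ with hq_def
  have hp0 : p ≠ 0 :=
    mul_ne_zero (mul_ne_zero hφ (fun h => hc (cq_eq_zero h))) (inv_ne_zero hφ)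
  have hpq : p * q = q * p := by
    rw [hp_def, hq_def, conj_mul, conj_mul, mul_comm (aμ μ - 1)]
  have hq2 : q * q = -(p * p) - 2 * p := by
    rw [hq_def, hp_def, conj_mul, conj_mul, hb2, cq_sub, cq_neg, cq_mul, cq_mul, cq_two]
    noncomm_ring
  have hdiv : ∀ x : ℍ, x / 2 = (2⁻¹ : ℝ) • x := by
    intro x
    have h2 : ((2:ℝ):ℍ) = (2:ℍ) := by norm_cast
    rw [div_eq_mul_inv, ← h2, ← Quaternion.coe_inv, Quaternion.mul_coe_eq_smul]
  have hT : Tq μ n φ = (2⁻¹ : ℝ) • (n * p + q) := by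
    rw [Tq, hdiv]
  have hρ : ρhat μ φ = (-(2⁻¹ : ℝ)) • p := by
    rw [ρhat]
    have h1 : (1 - aμ μ)/2 = (aμ μ - 1) * (((-(2⁻¹):ℝ)):ℂ) := by push_cast; ring
    rw [h1, cq_mul, cq_real, ← mul_assoc, Quaternion.mul_coe_eq_smul,
      smul_mul_assoc, ← hp_def]
  obtain ⟨hT0, hρ0, hcomm⟩ := main_aux n p q (Tq μ n φ) (ρhat μ φ) hsq hp0 hpq hq2 hT hρ
  have hThat0 : That μ n φ ≠ 0 := mul_ne_zero hT0 (inv_ne_zero hρ0)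
  have h1 : ∀ ψ : ℍ, Nhat μ n φ * (That μ n φ * ψ) = That μ n φ * (n * ψ) := by
    intro ψ
    rw [Nhat, That]
    rw [show (Tq μ n φ)⁻¹ * n * Tq μ n φ * (Tq μ n φ * (ρhat μ φ)⁻¹ * ψ)
        = (Tq μ n φ)⁻¹ * ((n * (Tq μ n φ * Tq μ n φ * (ρhat μ φ)⁻¹)) * ψ) from by
          noncomm_ring,
      hcomm,
      show (Tq μ n φ * Tq μ n φ * (ρhat μ φ)⁻¹ * n) * ψ
        = Tq μ n φ * (Tq μ n φ * (ρhat μ φ)⁻¹ * (n * ψ)) from by noncomm_ring,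
      inv_mul_cancel_left₀ hT0]
  have hbij : Set.BijOn (fun ψ => That μ n φ * ψ)
      {ψ : ℍ | n * ψ = ψ * qi} {ψ : ℍ | Nhat μ n φ * ψ = ψ * qi} := by
    refine ⟨?_, ?_, ?_⟩
    · intro ψ hψ
      simp only [Set.mem_setOf_eq] at hψ ⊢
      rw [h1 ψ, hψ, mul_assoc]
    · intro x _ y _ h
      exact mul_left_cancel₀ hThat0 h
    · intro χ hχ
      simp only [Set.mem_setOf_eq] at hχ
      refine ⟨(That μ n φ)⁻¹ * χ, ?_, by simp [mul_inv_cancel_left₀ hThat0]⟩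
      simp only [Set.mem_setOf_eq]
      have h2 := h1 ((That μ n φ)⁻¹ * χ)
      rw [mul_inv_cancel_left₀ hThat0, hχ] at h2
      have h3 : n * ((That μ n φ)⁻¹ * χ) = (That μ n φ)⁻¹ * (χ * qi) := by
        rw [h2, inv_mul_cancel_left₀ hThat0]
      rw [h3, mul_assoc]
  exact ⟨h1, hbij, hbij.image_eq⟩
end
end
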